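/- Let N ≥ 1, m ∈ ℕ, p ∈ ℋ^m(ℝ^N), and let γ ∈ ℕ^N be a multi-index. If |γ| ≤ m, then ‖∂^γ p‖_{L²(S^{N−1})} ≤ ((2m)^{|γ|} · (m + N/2 − 1)^(|γ|↓))^(1/2) · ‖p‖_{L²(S^{N−1})}; if |γ| > m, then ∂^γ p = 0. -/

import Mathlib

open MvPolynomial MeasureTheory

/-- The multi-index partial derivative `∂^γ` on polynomials. -/
noncomputable def mderiv {N : ℕ} (γ : Fin N → ℕ) :
    Module.End ℂ (MvPolynomial (Fin N) ℂ) :=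
  (List.finRange N).foldr
    (fun j D => ((MvPolynomial.pderiv j).toLinearMap) ^ (γ j) * D) 1

/-- The Laplacian `Δ = Σ_j ∂²/∂x_j²` on polynomials. -/
noncomputable def polyLap {N : ℕ} : Module.End ℂ (MvPolynomial (Fin N) ℂ) :=
  ∑ j : Fin N,
    ((MvPolynomial.pderiv j).toLinearMap * (MvPolynomial.pderiv j).toLinearMap)

/-- The `L²`-norm over the unit sphere `S^{N-1}` (with its standard surface measure)
of the restriction of a polynomial. -/
noncomputable def sphL2 {N : ℕ} (p : MvPolynomial (Fin N) ℂ) : ℝ :=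
  Real.sqrt (∫ ω : Metric.sphere (0 : EuclideanSpace ℝ (Fin N)) 1,
    ‖MvPolynomial.eval (fun j => ((ω : EuclideanSpace ℝ (Fin N)) j : ℂ)) p‖ ^ 2
      ∂((volume : Measure (EuclideanSpace ℝ (Fin N))).toSphere))

/-- The falling factorial `x(x-1)⋯(x-n+1)` of a real number. -/
noncomputable def fallingFactorial (x : ℝ) (n : ℕ) : ℝ :=
  ∏ i ∈ Finset.range n, (x - i)

open Real Set Filter

noncomputable def mu (n : ℕ) : ℝ := ∫ t : ℝ, t ^ n * Real.exp (-(1/2) * t^2)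

noncomputable def cInt (k : ℕ) : ℝ := ∫ r in Set.Ioi (0:ℝ), r ^ k * Real.exp (-(1/2) * r^2)

lemma integrable_pow_gauss (n : ℕ) :
    Integrable (fun t : ℝ => t ^ n * Real.exp (-(1/2) * t^2)) := by
  have h := integrable_rpow_mul_exp_neg_mul_sq (b := (1/2:ℝ)) (by norm_num)
    (s := (n:ℝ)) (lt_of_lt_of_le neg_one_lt_zero (Nat.cast_nonneg n))
  simpa [Real.rpow_natCast] using h

lemma hasDerivAt_gauss (t : ℝ) :
    HasDerivAt (fun t : ℝ => Real.exp (-(1/2) * t^2)) (-t * Real.exp (-(1/2) * t^2)) t := by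
  have h1 : HasDerivAt (fun t : ℝ => -(1/2) * t^2) (-t) t := by
    have := (hasDerivAt_pow 2 t).const_mul (-(1/2) : ℝ)
    refine this.congr_deriv ?_
    ring
  simpa [mul_comm] using h1.exp

lemma hasDerivAt_F (n : ℕ) (t : ℝ) :
    HasDerivAt (fun t : ℝ => t ^ n * Real.exp (-(1/2) * t^2))
      ((n : ℝ) * (t ^ (n - 1) * Real.exp (-(1/2) * t ^ 2))
        - t ^ (n+1) * Real.exp (-(1/2) * t ^ 2)) t := by
  have := (hasDerivAt_pow n t).mul (hasDerivAt_gauss t)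
  refine this.congr_deriv ?_
  ring

lemma tendsto_pow_gauss_top (n : ℕ) :
    Tendsto (fun t : ℝ => t ^ n * Real.exp (-(1/2) * t^2)) atTop (nhds 0) := by
  have h := rpow_mul_exp_neg_mul_sq_isLittleO_exp_neg (b := (1/2:ℝ)) (by norm_num) (n : ℝ)
  simp_rw [Real.rpow_natCast] at h
  have h2 : Tendsto (fun x : ℝ => Real.exp (-(1 / 2) * x)) atTop (nhds 0) := by
    have : Tendsto (fun x : ℝ => -(1/2) * x) atTop atBot := by
      apply Tendsto.const_mul_atTop_of_neg (by norm_num) tendsto_id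
    exact Real.tendsto_exp_atBot.comp this
  exact h.isBigO.trans_tendsto h2

lemma tendsto_pow_gauss_bot (n : ℕ) :
    Tendsto (fun t : ℝ => t ^ n * Real.exp (-(1/2) * t^2)) atBot (nhds 0) := by
  have h := (tendsto_pow_gauss_top n).comp tendsto_neg_atBot_atTop
  have h2 := h.const_mul ((-1:ℝ)^n)
  rw [mul_zero] at h2
  refine h2.congr fun t => ?_
  have hne : ((-1:ℝ)^n) * ((-1:ℝ)^n) = 1 := by
    rw [← pow_add]
    exact Even.neg_one_pow ⟨n, rfl⟩
  show ((-1:ℝ)^n) * ((-t) ^ n * Real.exp (-(1/2) * (-t)^2)) = t ^ n * Real.exp (-(1/2) * t^2)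
  rw [neg_sq, neg_pow t n, ← mul_assoc, ← mul_assoc, hne, one_mul]

lemma mu_succ (n : ℕ) : mu (n + 1) = n * mu (n - 1) := by
  have hint : Integrable (fun t : ℝ => (n : ℝ) * (t ^ (n - 1) * Real.exp (-(1/2) * t ^ 2))
      - t ^ (n+1) * Real.exp (-(1/2) * t ^ 2)) :=
    ((integrable_pow_gauss (n-1)).const_mul _).sub (integrable_pow_gauss (n+1))
  have h0 := MeasureTheory.integral_of_hasDerivAt_of_tendsto (hasDerivAt_F n) hint
    (tendsto_pow_gauss_bot n) (tendsto_pow_gauss_top n)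
  rw [sub_zero] at h0
  have h1 : ∫ t : ℝ, ((n : ℝ) * (t ^ (n - 1) * Real.exp (-(1/2) * t ^ 2))
      - t ^ (n+1) * Real.exp (-(1/2) * t ^ 2))
      = (n : ℝ) * mu (n-1) - mu (n+1) := by
    rw [integral_sub ((integrable_pow_gauss (n-1)).const_mul _) (integrable_pow_gauss (n+1)),
      integral_const_mul]
    rfl
  rw [h0] at h1
  linarith

lemma integrableOn_pow_gauss (k : ℕ) :
    IntegrableOn (fun r : ℝ => r ^ k * Real.exp (-(1/2) * r^2)) (Set.Ioi 0) :=
  (integrable_pow_gauss k).integrableOn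

lemma cInt_pos (k : ℕ) : 0 < cInt k := by
  rw [cInt]
  rw [setIntegral_pos_iff_support_of_nonneg_ae ?_ (integrableOn_pow_gauss k)]
  · refine lt_of_lt_of_le ?_ (measure_mono (?_ : Set.Ioi (1:ℝ) ⊆ _))
    · rw [Real.volume_Ioi]
      exact ENNReal.zero_lt_top
    · intro r hr
      have hr1 : (1:ℝ) < r := hr
      constructor
      · simp only [Function.mem_support]
        positivity
      · exact lt_trans zero_lt_one hr1
  · filter_upwards [ae_restrict_mem measurableSet_Ioi] with r hr
    have : (0:ℝ) < r := hr
    positivity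

lemma cInt_succ (k : ℕ) : cInt (k + 2) = (k + 1) * cInt k := by
  have hF := fun t : ℝ => hasDerivAt_F (k+1) t
  have h0 : ∫ r in Set.Ioi (0:ℝ), ((k+1 : ℕ) : ℝ) * (r ^ k * Real.exp (-(1/2) * r ^ 2))
      - r ^ (k+2) * Real.exp (-(1/2) * r ^ 2) = 0 := by
    have := integral_Ioi_of_hasDerivAt_of_tendsto' (a := (0:ℝ))
      (f := fun t : ℝ => t ^ (k+1) * Real.exp (-(1/2) * t^2))
      (f' := fun t : ℝ => ((k+1 : ℕ) : ℝ) * (t ^ k * Real.exp (-(1/2) * t ^ 2))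
        - t ^ (k+2) * Real.exp (-(1/2) * t ^ 2))
      (fun x _ => by simpa using hasDerivAt_F (k+1) x)
      (((integrable_pow_gauss k).const_mul _).sub (integrable_pow_gauss (k+2))).integrableOn
      (tendsto_pow_gauss_top (k+1))
    simpa using this
  have h1 : ∫ r in Set.Ioi (0:ℝ), (((k+1 : ℕ) : ℝ) * (r ^ k * Real.exp (-(1/2) * r ^ 2))
      - r ^ (k+2) * Real.exp (-(1/2) * r ^ 2))
      = ((k+1 : ℕ) : ℝ) * cInt k - cInt (k+2) := by
    rw [integral_sub (((integrable_pow_gauss k).const_mul _).integrableOn)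
      ((integrable_pow_gauss (k+2)).integrableOn), integral_const_mul]
    rfl
  rw [h0] at h1
  push_cast at h1 ⊢
  linarith

open MvPolynomial MeasureTheory









namespace SH

variable {N : ℕ}

lemma sum_split (f : Fin N → ℕ) (j : Fin N) :
    ∑ k, f k = f j + ∑ k ∈ Finset.univ.erase j, f k :=
  (Finset.add_sum_erase _ _ (Finset.mem_univ j)).symm

lemma degree_eq_sum (α : Fin N →₀ ℕ) : Finsupp.degree α = ∑ j : Fin N, α j := by
  rw [Finsupp.degree]
  exact Finset.sum_subset (Finset.subset_univ _)
    (fun i _ hi => Finsupp.notMem_support_iff.mp hi)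

lemma degree_of_mem {p : MvPolynomial (Fin N) ℂ} {m : ℕ} (h : p.IsHomogeneous m)
    {α} (hα : α ∈ p.support) : Finsupp.degree α = m := by
  rw [Finsupp.degree_eq_weight_one]
  exact h (mem_support_iff.mp hα)

lemma degree_sub_single {α : Fin N →₀ ℕ} {j : Fin N} (h : α j ≠ 0) :
    Finsupp.degree (α - Finsupp.single j 1) + 1 = Finsupp.degree α := by
  rw [degree_eq_sum, degree_eq_sum,
    ← Finset.add_sum_erase Finset.univ _ (Finset.mem_univ j),
    ← Finset.add_sum_erase Finset.univ _ (Finset.mem_univ j)]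
  have h1 : ((α - Finsupp.single j 1 : Fin N →₀ ℕ)) j = α j - 1 := by
    simp [Finsupp.tsub_apply]
  have h2 : ∑ k ∈ Finset.univ.erase j, ((α - Finsupp.single j 1 : Fin N →₀ ℕ)) k
      = ∑ k ∈ Finset.univ.erase j, α k := by
    refine Finset.sum_congr rfl fun k hk => ?_
    have hkj : k ≠ j := (Finset.mem_erase.mp hk).1
    simp [Finsupp.tsub_apply, Finsupp.single_eq_of_ne' (Ne.symm hkj)]
  rw [h1, h2]
  omega

lemma single_add_sub {α : Fin N →₀ ℕ} {j : Fin N} (h : α j ≠ 0) :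
    Finsupp.single j 1 + (α - Finsupp.single j 1) = α := by
  ext k
  rcases eq_or_ne k j with rfl | hk
  · simp only [Finsupp.add_apply, Finsupp.tsub_apply, Finsupp.single_eq_same]
    omega
  · simp [Finsupp.add_apply, Finsupp.tsub_apply, Finsupp.single_eq_of_ne' (Ne.symm hk)]

lemma X_mul_pderiv_monomial (j : Fin N) (α : Fin N →₀ ℕ) (c : ℂ) :
    X j * pderiv j (monomial α c) = ((α j : ℂ)) • monomial α c := by
  rw [pderiv_monomial, X, monomial_mul, one_mul, smul_monomial]
  by_cases h : α j = 0
  · simp [h]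
  · rw [single_add_sub h]
    congr 1
    · rw [smul_eq_mul]
      ring

lemma euler {p : MvPolynomial (Fin N) ℂ} {m : ℕ} (h : p.IsHomogeneous m) :
    ∑ j, (X j * pderiv j p) = (m : ℂ) • p := by
  have step : ∑ j, (X j * pderiv j p)
      = ∑ α ∈ p.support, (((Finsupp.degree α : ℕ) : ℂ)) • monomial α (coeff α p) := by
    conv_lhs => rw [← support_sum_monomial_coeff p]
    simp only [map_sum, Finset.mul_sum]
    rw [Finset.sum_comm]
    refine Finset.sum_congr rfl fun α hα => ?_
    rw [Finset.sum_congr rfl fun j _ => X_mul_pderiv_monomial j α _, ← Finset.sum_smul,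
      degree_eq_sum]
    norm_num
  rw [step, Finset.sum_congr rfl fun α hα => by rw [degree_of_mem h hα],
    ← Finset.smul_sum, support_sum_monomial_coeff]

lemma pderiv_comm (i j : Fin N) (f : MvPolynomial (Fin N) ℂ) :
    pderiv i (pderiv j f) = pderiv j (pderiv i f) := by
  induction f using MvPolynomial.induction_on' with
  | monomial α c =>
    rcases eq_or_ne i j with rfl | hij
    · rfl
    · rw [pderiv_monomial, pderiv_monomial, pderiv_monomial, pderiv_monomial]
      have hexp : α - Finsupp.single j 1 - Finsupp.single i 1
          = α - Finsupp.single i 1 - Finsupp.single j 1 := by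
        ext k
        simp only [Finsupp.tsub_apply]
        omega
      have hcoefj : ((α - Finsupp.single j 1 : Fin N →₀ ℕ)) i = α i := by
        simp [Finsupp.tsub_apply, Finsupp.single_eq_of_ne' hij.symm]
      have hcoefi : ((α - Finsupp.single i 1 : Fin N →₀ ℕ)) j = α j := by
        simp [Finsupp.tsub_apply, Finsupp.single_eq_of_ne' hij]
      rw [hexp, hcoefj, hcoefi]
      congr 1
      ring
  | add f g hf hg => simp [hf, hg]

lemma polyLap_apply (f : MvPolynomial (Fin N) ℂ) :
    polyLap f = ∑ j, pderiv j (pderiv j f) := by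
  simp [polyLap, LinearMap.sum_apply, Module.End.mul_apply]

noncomputable def conjP (f : MvPolynomial (Fin N) ℂ) : MvPolynomial (Fin N) ℂ :=
  MvPolynomial.map (starRingEnd ℂ) f

lemma conjP_pderiv (j : Fin N) (f : MvPolynomial (Fin N) ℂ) :
    conjP (pderiv j f) = pderiv j (conjP f) := (pderiv_map).symm

lemma conjP_polyLap (f : MvPolynomial (Fin N) ℂ) :
    polyLap (conjP f) = conjP (polyLap f) := by
  simp only [conjP, polyLap_apply, map_sum]
  exact Finset.sum_congr rfl fun j _ => by
    rw [pderiv_map, pderiv_map]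

lemma polyLap_pderiv (j : Fin N) (f : MvPolynomial (Fin N) ℂ) :
    polyLap (pderiv j f) = pderiv j (polyLap f) := by
  rw [polyLap_apply, polyLap_apply, map_sum]
  exact Finset.sum_congr rfl fun i _ => by
    rw [pderiv_comm i j f, pderiv_comm i j (pderiv i f)]

lemma isHomogeneous_pderiv {p : MvPolynomial (Fin N) ℂ} {m : ℕ}
    (h : p.IsHomogeneous (m+1)) (j : Fin N) : (pderiv j p).IsHomogeneous m := by
  have hrep : pderiv j p = ∑ α ∈ p.support, pderiv j (monomial α (coeff α p)) := by
    rw [← map_sum, support_sum_monomial_coeff]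
  rw [hrep]
  apply IsHomogeneous.sum
  intro α hα
  rw [pderiv_monomial]
  by_cases hj : α j = 0
  · rw [hj]
    norm_num
    exact isHomogeneous_zero _ _ _
  · apply isHomogeneous_monomial
    have h1 := degree_sub_single hj
    have h2 := degree_of_mem h hα
    omega

lemma pderiv_of_isHomogeneous_zero {p : MvPolynomial (Fin N) ℂ}
    (h : p.IsHomogeneous 0) (j : Fin N) : pderiv j p = 0 := by
  have hrep : pderiv j p = ∑ α ∈ p.support, pderiv j (monomial α (coeff α p)) := by
    rw [← map_sum, support_sum_monomial_coeff]
  rw [hrep]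
  apply Finset.sum_eq_zero
  intro α hα
  have hd := degree_of_mem h hα
  rw [degree_eq_sum] at hd
  have hz : α j = 0 := by
    have := sum_split (fun k => α k) j
    omega
  rw [pderiv_monomial, hz]
  norm_num

section mderivLemmas

noncomputable abbrev DD (j : Fin N) : Module.End ℂ (MvPolynomial (Fin N) ℂ) :=
  (pderiv j).toLinearMap

noncomputable def Dl (l : List (Fin N)) (γ : Fin N → ℕ) :
    Module.End ℂ (MvPolynomial (Fin N) ℂ) :=
  l.foldr (fun j D => (DD j) ^ (γ j) * D) 1

lemma mderiv_eq_Dl (γ : Fin N → ℕ) : mderiv γ = Dl (List.finRange N) γ := rfl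

lemma commute_DD (i j : Fin N) : Commute (DD (N := N) i) (DD j) := by
  apply LinearMap.ext
  intro f
  exact pderiv_comm i j f

lemma commute_DD_Dl (j : Fin N) (l : List (Fin N)) (γ : Fin N → ℕ) :
    Commute (DD j) (Dl l γ) := by
  induction l with
  | nil => exact Commute.one_right _
  | cons i t ih => exact (((commute_DD j i).pow_right _).mul_right ih)

lemma Dl_congr {γ γ' : Fin N → ℕ} {j : Fin N} (hagree : ∀ i, i ≠ j → γ i = γ' i)
    {l : List (Fin N)} (hj : j ∉ l) : Dl l γ = Dl l γ' := by
  induction l with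
  | nil => rfl
  | cons i t ih =>
    have hij : i ≠ j := fun hcon => hj (hcon ▸ List.mem_cons_self)
    have hjt : j ∉ t := fun hcon => hj (List.mem_cons_of_mem i hcon)
    show (DD i) ^ (γ i) * Dl t γ = (DD i) ^ (γ' i) * Dl t γ'
    rw [hagree i hij, ih hjt]

lemma Dl_update {γ : Fin N → ℕ} {j : Fin N} (hj : γ j ≠ 0) :
    ∀ {l : List (Fin N)}, j ∈ l → l.Nodup →
    Dl l γ = Dl l (Function.update γ j (γ j - 1)) * DD j := by
  intro l
  induction l with
  | nil => intro h; exact absurd h (List.not_mem_nil)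
  | cons i t ih =>
    intro hmem hnd
    rcases List.mem_cons.mp hmem with rfl | hmemt
    · have hjt : j ∉ t := (List.nodup_cons.mp hnd).1
      have hDl : Dl t γ = Dl t (Function.update γ j (γ j - 1)) :=
        Dl_congr (fun k hk => (Function.update_of_ne hk _ _).symm) hjt
      show (DD j) ^ (γ j) * Dl t γ
        = (DD j) ^ (Function.update γ j (γ j - 1) j)
            * Dl t (Function.update γ j (γ j - 1)) * DD j
      rw [Function.update_self, hDl]
      have hpow : (DD (N := N) j) ^ (γ j) = (DD j) ^ (γ j - 1) * DD j := by
        conv_lhs => rw [show γ j = (γ j - 1) + 1 by omega]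
        rw [pow_succ]
      rw [hpow, mul_assoc, mul_assoc]
      congr 1
      rw [(commute_DD_Dl j t _).eq]
    · have hij : i ≠ j := by
        rintro rfl
        exact ((List.nodup_cons.mp hnd).1 hmemt).elim
      show (DD i) ^ (γ i) * Dl t γ
        = (DD i) ^ (Function.update γ j (γ j - 1) i)
            * Dl t (Function.update γ j (γ j - 1)) * DD j
      rw [Function.update_of_ne hij, ih hmemt (List.nodup_cons.mp hnd).2, ← mul_assoc]

end mderivLemmas


section Integration

variable {N : ℕ}

noncomputable def Ev (f : MvPolynomial (Fin N) ℂ) (x : EuclideanSpace ℝ (Fin N)) : ℂ :=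
  MvPolynomial.eval (fun j => (x j : ℂ)) f

noncomputable def gss (x : EuclideanSpace ℝ (Fin N)) : ℝ := Real.exp (-(1/2) * ‖x‖^2)

noncomputable def Jint (f : MvPolynomial (Fin N) ℂ) (x : EuclideanSpace ℝ (Fin N)) : ℂ :=
  Ev f x * (gss x : ℂ)

noncomputable def J (f : MvPolynomial (Fin N) ℂ) : ℂ := ∫ x, Jint f x

noncomputable def S (f : MvPolynomial (Fin N) ℂ) : ℝ :=
  ∫ ω : Metric.sphere (0 : EuclideanSpace ℝ (Fin N)) 1,
    ‖Ev f (ω : EuclideanSpace ℝ (Fin N))‖ ^ 2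
      ∂((volume : Measure (EuclideanSpace ℝ (Fin N))).toSphere)

lemma Ev_sum {ι : Type*} (s : Finset ι) (g : ι → MvPolynomial (Fin N) ℂ)
    (x : EuclideanSpace ℝ (Fin N)) : Ev (∑ i ∈ s, g i) x = ∑ i ∈ s, Ev (g i) x := by
  simp [Ev]

lemma Ev_conjP (f : MvPolynomial (Fin N) ℂ) (x : EuclideanSpace ℝ (Fin N)) :
    Ev (conjP f) x = (starRingEnd ℂ) (Ev f x) := by
  induction f using MvPolynomial.induction_on' with
  | monomial α c =>
    simp only [Ev, conjP, map_monomial, eval_monomial, map_mul]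
    congr 1
    rw [map_finsuppProd]
    refine Finsupp.prod_congr fun j _ => ?_
    rw [map_pow, Complex.conj_ofReal]
  | add f g hf hg =>
    simp only [Ev, conjP, map_add] at hf hg ⊢
    rw [hf, hg]

lemma Ev_normSq (f : MvPolynomial (Fin N) ℂ) (x : EuclideanSpace ℝ (Fin N)) :
    Ev (f * conjP f) x = ((‖Ev f x‖ ^ 2 : ℝ) : ℂ) := by
  rw [Ev, map_mul, ← Ev, ← Ev, Ev_conjP, Complex.mul_conj]
  congr 1
  rw [Complex.normSq_eq_norm_sq]

lemma eval_mul_of_hom {f : MvPolynomial (Fin N) ℂ} {m : ℕ} (h : f.IsHomogeneous m)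
    (c : ℂ) (y : Fin N → ℂ) :
    MvPolynomial.eval (fun j => c * y j) f = c ^ m * MvPolynomial.eval y f := by
  conv_lhs => rw [← support_sum_monomial_coeff f]
  conv_rhs => rw [← support_sum_monomial_coeff f]
  rw [map_sum, map_sum, Finset.mul_sum]
  refine Finset.sum_congr rfl fun α hα => ?_
  rw [eval_monomial, eval_monomial, Finsupp.prod_fintype _ _ (fun j => pow_zero _),
    Finsupp.prod_fintype _ _ (fun j => pow_zero _)]
  have hsplit : ∏ j, (c * y j) ^ (α j)
      = (∏ j, c ^ (α j)) * ∏ j, (y j) ^ (α j) := by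
    rw [← Finset.prod_mul_distrib]
    exact Finset.prod_congr rfl fun j _ => mul_pow _ _ _
  rw [hsplit, Finset.prod_pow_eq_pow_sum]
  have hdeg : ∑ j, α j = m := (degree_eq_sum α).symm.trans (degree_of_mem h hα)
  rw [hdeg]
  ring

lemma Ev_smul_point {f : MvPolynomial (Fin N) ℂ} {m : ℕ} (h : f.IsHomogeneous m)
    (r : ℝ) (x : EuclideanSpace ℝ (Fin N)) :
    Ev f (r • x) = (r : ℂ) ^ m * Ev f x := by
  rw [Ev, Ev]
  have hx : (fun j => (((r • x : EuclideanSpace ℝ (Fin N)) j : ℝ) : ℂ))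
      = fun j => (r : ℂ) * ((x j : ℝ) : ℂ) := by
    funext j
    have hco : (r • x : EuclideanSpace ℝ (Fin N)) j = r * x j := rfl
    rw [hco]
    push_cast
    ring
  rw [hx, eval_mul_of_hom h]

local notation "φe" => MeasurableEquiv.symm (MeasurableEquiv.toLp 2 (Fin N → ℝ))

lemma integral_euclidean_eq_pi (g : EuclideanSpace ℝ (Fin N) → ℂ) :
    ∫ x, g x = ∫ y : Fin N → ℝ, g ((φe).symm y) :=
  ((MeasurePreserving.symm _
    (EuclideanSpace.volume_preserving_symm_measurableEquiv_toLp (Fin N))).integral_comp' g).symm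

lemma integrable_euclidean_iff (g : EuclideanSpace ℝ (Fin N) → ℂ) :
    Integrable (fun y : Fin N → ℝ => g ((φe).symm y)) ↔ Integrable g :=
  (MeasurePreserving.symm _
    (EuclideanSpace.volume_preserving_symm_measurableEquiv_toLp (Fin N))).integrable_comp_emb
    (MeasurableEquiv.measurableEmbedding _)

lemma coord_symm (y : Fin N → ℝ) (j : Fin N) : ((φe).symm y) j = y j := rfl

lemma norm_sq_eq (x : EuclideanSpace ℝ (Fin N)) : ‖x‖^2 = ∑ j, (x j)^2 := by
  rw [EuclideanSpace.norm_eq, Real.sq_sqrt (by positivity)]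
  exact Finset.sum_congr rfl fun j _ => by rw [Real.norm_eq_abs, sq_abs]

lemma gss_pi (y : Fin N → ℝ) :
    gss ((φe).symm y) = ∏ j, Real.exp (-(1/2) * (y j)^2) := by
  rw [gss, norm_sq_eq]
  have hsum : -(1/2 : ℝ) * ∑ j, (((φe).symm y) j)^2 = ∑ j, -(1/2 : ℝ) * (y j)^2 := by
    rw [Finset.mul_sum]
    exact Finset.sum_congr rfl fun j _ => by rw [coord_symm]
  rw [hsum, Real.exp_sum]

lemma Jint_monomial_pi (α : Fin N →₀ ℕ) (c : ℂ) :
    (fun y : Fin N → ℝ => Jint (monomial α c) ((φe).symm y))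
      = fun y => c * ∏ j, ((y j : ℂ) ^ (α j) * ((Real.exp (-(1/2) * (y j)^2) : ℝ) : ℂ)) := by
  funext y
  rw [Jint, Ev, eval_monomial, gss_pi, Finsupp.prod_fintype _ _ (fun j => pow_zero _),
    Complex.ofReal_prod, mul_assoc, ← Finset.prod_mul_distrib]
  simp only [coord_symm]

lemma integral_ofReal_complex {X : Type*} [MeasurableSpace X] {μ : Measure X} (f : X → ℝ) :
    ∫ x, ((f x : ℝ) : ℂ) ∂μ = ((∫ x, f x ∂μ : ℝ) : ℂ) :=
  integral_ofReal

lemma cast_pow_gauss (n : ℕ) :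
    (fun t : ℝ => (t : ℂ) ^ n * ((Real.exp (-(1/2) * t^2) : ℝ) : ℂ))
      = fun t : ℝ => ((t ^ n * Real.exp (-(1/2) * t^2) : ℝ) : ℂ) := by
  funext t
  push_cast
  ring

lemma J_monomial (α : Fin N →₀ ℕ) (c : ℂ) :
    J (monomial α c) = c * ∏ j, (mu (α j) : ℂ) := by
  rw [J, integral_euclidean_eq_pi, Jint_monomial_pi, integral_const_mul,
    MeasureTheory.integral_fintype_prod_volume_eq_prod
      (fun j (t : ℝ) => (t : ℂ) ^ (α j) * ((Real.exp (-(1/2) * t^2) : ℝ) : ℂ))]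
  congr 1
  refine Finset.prod_congr rfl fun j _ => ?_
  have hmu : mu (α j) = ∫ t : ℝ, t ^ (α j) * Real.exp (-(1/2) * t^2) := rfl
  rw [cast_pow_gauss, hmu]
  exact integral_ofReal_complex _

lemma integrable_Jint_monomial (α : Fin N →₀ ℕ) (c : ℂ) :
    Integrable (Jint (monomial α c)) := by
  rw [← integrable_euclidean_iff, Jint_monomial_pi]
  apply Integrable.const_mul
  apply Integrable.fintype_prod (E := ℝ)
    (f := fun j (t : ℝ) => (t : ℂ) ^ (α j) * ((Real.exp (-(1/2) * t^2) : ℝ) : ℂ))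
  intro j
  rw [cast_pow_gauss]
  exact (integrable_pow_gauss (α j)).ofReal

lemma Jint_sum {ι : Type*} (s : Finset ι) (g : ι → MvPolynomial (Fin N) ℂ) :
    Jint (∑ i ∈ s, g i) = fun x => ∑ i ∈ s, Jint (g i) x := by
  funext x
  rw [Jint, Ev_sum, Finset.sum_mul]
  rfl

lemma integrable_Jint (f : MvPolynomial (Fin N) ℂ) : Integrable (Jint f) := by
  have hrep : Jint f = fun x => ∑ α ∈ f.support, Jint (monomial α (coeff α f)) x := by
    conv_lhs => rw [← support_sum_monomial_coeff f]
    exact Jint_sum _ _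
  rw [hrep]
  exact integrable_finset_sum _ fun α _ => integrable_Jint_monomial α _

lemma J_sum {ι : Type*} (s : Finset ι) (g : ι → MvPolynomial (Fin N) ℂ) :
    J (∑ i ∈ s, g i) = ∑ i ∈ s, J (g i) := by
  rw [J, Jint_sum, integral_finset_sum s (fun i _ => integrable_Jint (g i))]
  rfl

lemma J_sub (f g : MvPolynomial (Fin N) ℂ) : J (f - g) = J f - J g := by
  rw [J, J, J, ← integral_sub (integrable_Jint f) (integrable_Jint g)]
  congr 1
  funext x
  rw [Jint, Jint, Jint, Ev, map_sub, sub_mul]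
  rfl

lemma J_smul (c : ℂ) (f : MvPolynomial (Fin N) ℂ) : J (c • f) = c * J f := by
  have : Jint (c • f) = fun x => c * Jint f x := by
    funext x
    rw [Jint, Ev, smul_eval, Jint, Ev, mul_assoc]
  rw [J, this, integral_const_mul, J]

lemma J_zero : J (0 : MvPolynomial (Fin N) ℂ) = 0 := by
  have : Jint (0 : MvPolynomial (Fin N) ℂ) = fun _ => 0 := by
    funext x
    rw [Jint, Ev, map_zero, zero_mul]
  rw [J, this, integral_zero]

lemma J_pderiv (j : Fin N) (f : MvPolynomial (Fin N) ℂ) :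
    J (pderiv j f) = J (X j * f) := by
  have h1 : pderiv j f = ∑ α ∈ f.support, pderiv j (monomial α (coeff α f)) := by
    rw [← map_sum, support_sum_monomial_coeff]
  have h2 : X j * f = ∑ α ∈ f.support, X j * monomial α (coeff α f) := by
    rw [← Finset.mul_sum, support_sum_monomial_coeff]
  rw [h1, h2, J_sum, J_sum]
  refine Finset.sum_congr rfl fun α hα => ?_
  rw [pderiv_monomial, X, monomial_mul, one_mul, J_monomial, J_monomial,
    ← Finset.mul_prod_erase Finset.univ _ (Finset.mem_univ j),
    ← Finset.mul_prod_erase Finset.univ _ (Finset.mem_univ j)]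
  have hprod : ∏ k ∈ Finset.univ.erase j, (mu (((α - Finsupp.single j 1 : Fin N →₀ ℕ)) k) : ℂ)
      = ∏ k ∈ Finset.univ.erase j, (mu (((Finsupp.single j 1 + α : Fin N →₀ ℕ)) k) : ℂ) := by
    refine Finset.prod_congr rfl fun k hk => ?_
    have hkj : k ≠ j := (Finset.mem_erase.mp hk).1
    rw [Finsupp.tsub_apply, Finsupp.add_apply, Finsupp.single_eq_of_ne' (Ne.symm hkj)]
    norm_num
  have hj1 : ((α - Finsupp.single j 1 : Fin N →₀ ℕ)) j = α j - 1 := by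
    simp [Finsupp.tsub_apply]
  have hj2 : ((Finsupp.single j 1 + α : Fin N →₀ ℕ)) j = α j + 1 := by
    simp [Finsupp.add_apply, add_comm]
  rw [hprod, hj1, hj2, mu_succ (α j)]
  push_cast
  ring

lemma key_J {p : MvPolynomial (Fin N) ℂ} {m : ℕ}
    (hhom : p.IsHomogeneous m) (hharm : polyLap p = 0) :
    ∑ j, J (pderiv j p * conjP (pderiv j p)) = (m : ℂ) * J (p * conjP p) := by
  set q := conjP p with hq
  have hqhom : q.IsHomogeneous m := hhom.map _
  have hqlap : ∑ j, pderiv j (pderiv j q) = 0 := by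
    rw [← polyLap_apply, conjP_polyLap, hharm]
    simp [conjP]
  have step1 : ∀ j : Fin N, pderiv j p * conjP (pderiv j p)
      = pderiv j (p * pderiv j q) - p * pderiv j (pderiv j q) := by
    intro j
    rw [conjP_pderiv, ← hq, pderiv_mul]
    ring
  calc ∑ j, J (pderiv j p * conjP (pderiv j p))
      = ∑ j, (J (pderiv j (p * pderiv j q)) - J (p * pderiv j (pderiv j q))) := by
        refine Finset.sum_congr rfl fun j _ => ?_
        rw [step1 j, J_sub]
    _ = ∑ j, J (X j * (p * pderiv j q)) - ∑ j, J (p * pderiv j (pderiv j q)) := by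
        rw [Finset.sum_sub_distrib]
        congr 1
        exact Finset.sum_congr rfl fun j _ => (J_pderiv j _)
    _ = J (∑ j, X j * (p * pderiv j q)) - J (∑ j, p * pderiv j (pderiv j q)) := by
        rw [J_sum, J_sum]
    _ = J (p * ∑ j, X j * pderiv j q) - J (p * 0) := by
        congr 1
        · congr 1
          rw [Finset.mul_sum]
          exact Finset.sum_congr rfl fun j _ => by ring
        · congr 1
          rw [← Finset.mul_sum, hqlap]
    _ = (m : ℂ) * J (p * q) := by
        rw [euler hqhom, mul_zero, J_zero, sub_zero, mul_smul_comm, J_smul]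

noncomputable def Gr (f : MvPolynomial (Fin N) ℂ) : ℝ := ∫ x, ‖Ev f x‖ ^ 2 * gss x

lemma Gr_eq_J (f : MvPolynomial (Fin N) ℂ) : ((Gr f : ℝ) : ℂ) = J (f * conjP f) := by
  rw [J, Gr, ← integral_ofReal_complex]
  congr 1
  funext x
  rw [Jint, Ev_normSq]
  push_cast
  ring

lemma key_Gr {p : MvPolynomial (Fin N) ℂ} {m : ℕ}
    (hhom : p.IsHomogeneous m) (hharm : polyLap p = 0) :
    ∑ j, Gr (pderiv j p) = (m : ℝ) * Gr p := by
  have h := key_J hhom hharm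
  have hcast : (((∑ j, Gr (pderiv j p)) : ℝ) : ℂ) = (((m : ℝ) * Gr p : ℝ) : ℂ) := by
    rw [Complex.ofReal_sum]
    calc ∑ j, ((Gr (pderiv j p) : ℝ) : ℂ)
        = ∑ j, J (pderiv j p * conjP (pderiv j p)) :=
          Finset.sum_congr rfl fun j _ => Gr_eq_J _
      _ = (m : ℂ) * J (p * conjP p) := h
      _ = (m : ℂ) * ((Gr p : ℝ) : ℂ) := by rw [Gr_eq_J]
      _ = (((m : ℝ) * Gr p : ℝ) : ℂ) := by push_cast; ring
  exact_mod_cast hcast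

lemma Gr_polar (hN : 1 ≤ N) {f : MvPolynomial (Fin N) ℂ} {d : ℕ}
    (hf : f.IsHomogeneous d) :
    Gr f = cInt (2*d + (N-1)) * S f := by
  haveI : Nonempty (Fin N) := Fin.pos_iff_nonempty.mp hN
  haveI : Nontrivial (EuclideanSpace ℝ (Fin N)) := inferInstance
  set E := EuclideanSpace ℝ (Fin N)
  set F : E → ℝ := fun x => ‖Ev f x‖^2 * gss x with hF
  set n1 := Module.finrank ℝ E - 1 with hn1
  have h0 : Gr f = ∫ x : ({(0 : E)}ᶜ : Set E), F x ∂(Measure.comap Subtype.val volume) := by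
    have h := integral_subtype_comap (μ := (volume : Measure E))
      ((measurableSet_singleton (0 : E)).compl) F
    rw [restrict_compl_singleton] at h
    exact h.symm
  have hhomeo := (volume : Measure E).measurePreserving_homeomorphUnitSphereProd
  have h1 : ∫ x : ({(0 : E)}ᶜ : Set E), F x ∂(Measure.comap Subtype.val volume)
      = ∫ z : Metric.sphere (0 : E) 1 × Set.Ioi (0:ℝ), F ((z.2 : ℝ) • (z.1 : E))
          ∂(((volume : Measure E).toSphere).prod (Measure.volumeIoiPow n1)) := by
    rw [← hhomeo.integral_comp (Homeomorph.measurableEmbedding _)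
      (fun z : Metric.sphere (0 : E) 1 × Set.Ioi (0:ℝ) => F ((z.2 : ℝ) • (z.1 : E)))]
    refine integral_congr_ae (Filter.Eventually.of_forall fun x => ?_)
    have hx0 : (x : E) ≠ 0 := x.2
    have hx : (((homeomorphUnitSphereProd E) x).2 : ℝ) • ((((homeomorphUnitSphereProd E) x).1 : E))
        = (x : E) := by
      simp only [homeomorphUnitSphereProd_apply_fst_coe, homeomorphUnitSphereProd_apply_snd_coe]
      exact smul_inv_smul₀ (norm_ne_zero_iff.2 hx0) (x : E)
    exact (congrArg F hx).symm
  have h2 : (fun z : Metric.sphere (0 : E) 1 × Set.Ioi (0:ℝ) => F ((z.2 : ℝ) • (z.1 : E)))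
      = fun z => (‖Ev f (z.1 : E)‖^2) * (((z.2 : ℝ)^(2*d)) * Real.exp (-(1/2) * (z.2 : ℝ)^2)) := by
    funext z
    obtain ⟨ω, r⟩ := z
    have hr : (0:ℝ) < (r : ℝ) := r.2
    have hω : ‖(ω : E)‖ = 1 := by
      simpa [mem_sphere_iff_norm] using ω.2
    show ‖Ev f ((r : ℝ) • (ω : E))‖^2 * gss ((r : ℝ) • (ω : E)) = _
    rw [Ev_smul_point hf, gss, norm_smul, Real.norm_eq_abs, abs_of_pos hr, hω, mul_one,
      norm_mul, norm_pow]
    have hnr : ‖(((r : ℝ) : ℝ) : ℂ)‖ = (r : ℝ) := by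
      rw [Complex.norm_real, Real.norm_eq_abs, abs_of_pos hr]
    rw [hnr, mul_pow, ← pow_mul, Nat.mul_comm d 2]
    ring
  have h3 : ∫ r : Set.Ioi (0:ℝ), ((r : ℝ)^(2*d) * Real.exp (-(1/2) * (r : ℝ)^2))
      ∂(Measure.volumeIoiPow n1) = cInt (2*d + (N-1)) := by
    rw [hn1]
    have hfr : Module.finrank ℝ E = N := finrank_euclideanSpace_fin
    rw [hfr]
    simp only [Measure.volumeIoiPow, ENNReal.ofReal]
    rw [integral_withDensity_eq_integral_smul ((measurable_subtype_coe.pow_const _).real_toNNReal)]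
    rw [integral_subtype_comap measurableSet_Ioi
      (fun a : ℝ => Real.toNNReal (a ^ (N-1)) • (a^(2*d) * Real.exp (-(1/2) * a^2)))]
    rw [cInt]
    refine setIntegral_congr_fun measurableSet_Ioi fun r hr => ?_
    have hr0 : (0:ℝ) < r := hr
    rw [NNReal.smul_def, Real.coe_toNNReal _ (pow_nonneg hr0.le _), smul_eq_mul, pow_add]
    ring
  have hS : S f = ∫ ω : Metric.sphere (0 : E) 1, ‖Ev f (ω : E)‖^2
      ∂((volume : Measure E).toSphere) := rfl
  rw [h0, h1, h2, integral_prod_mul (μ := (volume : Measure E).toSphere)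
    (ν := Measure.volumeIoiPow n1)
    (f := fun ω : Metric.sphere (0 : E) 1 => ‖Ev f (ω : E)‖^2)
    (g := fun r : Set.Ioi (0:ℝ) => ((r : ℝ)^(2*d) * Real.exp (-(1/2) * (r : ℝ)^2))), h3, ← hS]
  ring

lemma S_nonneg (f : MvPolynomial (Fin N) ℂ) : 0 ≤ S f :=
  integral_nonneg fun ω => by positivity

lemma sum_S (hN : 1 ≤ N) {p : MvPolynomial (Fin N) ℂ} {m : ℕ}
    (hhom : p.IsHomogeneous (m+1)) (hharm : polyLap p = 0) :
    ∑ j, S (pderiv j p) = ((m : ℝ) + 1) * (2*m + N) * S p := by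
  have hkey := key_Gr hhom hharm
  have hpolar_p : Gr p = cInt (2*(m+1) + (N-1)) * S p := Gr_polar hN hhom
  have hpolar_j : ∀ j, Gr (pderiv j p) = cInt (2*m + (N-1)) * S (pderiv j p) :=
    fun j => Gr_polar hN (isHomogeneous_pderiv hhom j)
  have hc : cInt (2*(m+1) + (N-1)) = (((2*m + (N-1) : ℕ) : ℝ) + 1) * cInt (2*m + (N-1)) := by
    rw [show 2*(m+1) + (N-1) = (2*m + (N-1)) + 2 from by omega]
    exact cInt_succ _
  have hlow := cInt_pos (2*m + (N-1))
  have hcast : (((2*m + (N-1) : ℕ) : ℝ) + 1) = 2*(m:ℝ) + N := by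
    push_cast [Nat.cast_sub hN]
    ring
  have hmain : cInt (2*m + (N-1)) * (∑ j, S (pderiv j p))
      = cInt (2*m + (N-1)) * (((m : ℝ) + 1) * (2*m + N) * S p) := by
    rw [Finset.mul_sum]
    calc ∑ j, cInt (2*m + (N-1)) * S (pderiv j p)
        = ∑ j, Gr (pderiv j p) := Finset.sum_congr rfl fun j _ => (hpolar_j j).symm
      _ = ((m+1 : ℕ) : ℝ) * Gr p := hkey
      _ = ((m+1 : ℕ) : ℝ) * (cInt (2*(m+1) + (N-1)) * S p) := by rw [hpolar_p]
      _ = cInt (2*m + (N-1)) * (((m : ℝ) + 1) * (2*m + N) * S p) := by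
          rw [hc, hcast]
          push_cast
          ring
  exact mul_left_cancel₀ hlow.ne' hmain

lemma S_pderiv_le (hN : 1 ≤ N) {p : MvPolynomial (Fin N) ℂ} {m : ℕ}
    (hhom : p.IsHomogeneous (m+1)) (hharm : polyLap p = 0) (j : Fin N) :
    S (pderiv j p) ≤ ((m : ℝ) + 1) * (2*m + N) * S p := by
  rw [← sum_S hN hhom hharm]
  exact Finset.single_le_sum (f := fun j => S (pderiv j p))
    (fun i _ => S_nonneg _) (Finset.mem_univ j)

end Integration

section Main

variable {N : ℕ}

lemma sum_update (γ : Fin N → ℕ) (j : Fin N) (h : γ j ≠ 0) :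
    ∑ k, Function.update γ j (γ j - 1) k = (∑ k, γ k) - 1 := by
  have h1 := sum_split (Function.update γ j (γ j - 1)) j
  have h2 := sum_split γ j
  have h3 : ∑ k ∈ Finset.univ.erase j, Function.update γ j (γ j - 1) k
      = ∑ k ∈ Finset.univ.erase j, γ k :=
    Finset.sum_congr rfl fun k hk => Function.update_of_ne (Finset.mem_erase.mp hk).1 _ _
  have h4 : Function.update γ j (γ j - 1) j = γ j - 1 := Function.update_self _ _ _
  omega

lemma Dl_one {γ : Fin N → ℕ} (hz : ∀ j, γ j = 0) : ∀ l : List (Fin N), Dl l γ = 1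
  | [] => rfl
  | i :: t => by
    show (DD i) ^ (γ i) * Dl t γ = 1
    rw [hz i, pow_zero, one_mul]
    exact Dl_one hz t

lemma mderiv_zero_sum {γ : Fin N → ℕ} (h : ∑ j, γ j = 0) : mderiv γ = 1 := by
  have hz : ∀ j, γ j = 0 := fun j => by
    have := Finset.sum_eq_zero_iff.mp h j (Finset.mem_univ j)
    exact this
  rw [mderiv_eq_Dl]
  exact Dl_one hz _

lemma mderiv_update {γ : Fin N → ℕ} {j : Fin N} (hj : γ j ≠ 0) :
    mderiv γ = mderiv (Function.update γ j (γ j - 1)) * DD j := by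
  rw [mderiv_eq_Dl, mderiv_eq_Dl]
  exact Dl_update hj (List.mem_finRange j) (List.nodup_finRange N)

lemma exists_ne_zero {γ : Fin N → ℕ} {k : ℕ} (hsum : ∑ j, γ j = k + 1) :
    ∃ j, γ j ≠ 0 := by
  by_contra hcon
  push_neg at hcon
  have : ∑ j, γ j = 0 := Finset.sum_eq_zero fun j _ => hcon j
  omega

lemma vanish : ∀ (k : ℕ) (γ : Fin N → ℕ) (m : ℕ) (p : MvPolynomial (Fin N) ℂ),
    p.IsHomogeneous m → (∑ j, γ j) = k → m < k → mderiv γ p = 0 := by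
  intro k
  induction k with
  | zero => intro γ m p _ _ hmk; omega
  | succ k ih =>
    intro γ m p hhom hsum hmk
    obtain ⟨j, hj⟩ := exists_ne_zero hsum
    rw [mderiv_update hj, Module.End.mul_apply]
    have hsum' : ∑ kk, Function.update γ j (γ j - 1) kk = k := by
      rw [sum_update γ j hj]
      omega
    cases m with
    | zero =>
      have hz : (DD j) p = 0 := pderiv_of_isHomogeneous_zero hhom j
      rw [hz, map_zero]
    | succ m' =>
      exact ih _ m' _ (isHomogeneous_pderiv hhom j) hsum' (by omega)

lemma prod_fact_nonneg (hN : 1 ≤ N) {m k : ℕ} (hkm : k ≤ m) :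
    0 ≤ ∏ i ∈ Finset.range k, ((m:ℝ) + (N:ℝ)/2 - 1 - i) := by
  apply Finset.prod_nonneg
  intro i hi
  have hik : i < k := Finset.mem_range.mp hi
  have hNr : (1:ℝ) ≤ N := Nat.one_le_cast.mpr hN
  have hi1 : (i:ℝ) + 1 ≤ (m:ℝ) := by exact_mod_cast Nat.succ_le_of_lt (lt_of_lt_of_le hik hkm)
  linarith

lemma main_ineq (hN : 1 ≤ N) : ∀ (k : ℕ) (γ : Fin N → ℕ) (m : ℕ) (p : MvPolynomial (Fin N) ℂ),
    p.IsHomogeneous m → polyLap p = 0 → (∑ j, γ j) = k → k ≤ m →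
    S (mderiv γ p) ≤
      ((2*(m:ℝ))^k * ∏ i ∈ Finset.range k, ((m:ℝ) + (N:ℝ)/2 - 1 - i)) * S p := by
  intro k
  induction k with
  | zero =>
    intro γ m p hhom hharm hsum hkm
    have h1 : mderiv γ p = p := by
      rw [mderiv_zero_sum hsum]
      rfl
    rw [h1]
    simp
  | succ k ih =>
    intro γ m p hhom hharm hsum hkm
    obtain ⟨j, hj⟩ := exists_ne_zero hsum
    obtain ⟨m', rfl⟩ : ∃ m', m = m' + 1 := ⟨m - 1, by omega⟩
    have hNr : (1:ℝ) ≤ N := Nat.one_le_cast.mpr hN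
    set γ' := Function.update γ j (γ j - 1) with hγ'
    have hsum' : ∑ kk, γ' kk = k := by
      rw [hγ', sum_update γ j hj]
      omega
    have hkm' : k ≤ m' := by omega
    set q := pderiv j p with hq
    have hqhom : q.IsHomogeneous m' := isHomogeneous_pderiv hhom j
    have hqharm : polyLap q = 0 := by rw [hq, polyLap_pderiv, hharm, map_zero]
    have hmd : mderiv γ p = mderiv γ' q := by
      rw [mderiv_update hj, Module.End.mul_apply]
      rfl
    have hIH := ih γ' m' q hqhom hqharm hsum' hkm'
    set P := ∏ i ∈ Finset.range k, ((m':ℝ) + (N:ℝ)/2 - 1 - i) with hPdef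
    have hP : 0 ≤ P := prod_fact_nonneg hN hkm'
    have hstep : S q ≤ (2*((m':ℝ)+1)) * ((((m':ℝ)+1) + (N:ℝ)/2 - 1)) * S p := by
      calc S q ≤ ((m' : ℝ)+1) * (2*m' + N) * S p := S_pderiv_le hN hhom hharm j
        _ = (2*((m':ℝ)+1)) * ((((m':ℝ)+1) + (N:ℝ)/2 - 1)) * S p := by ring
    have hBnn : (0:ℝ) ≤ (((m':ℝ)+1) + (N:ℝ)/2 - 1) := by linarith
    have hprod : ∏ i ∈ Finset.range (k+1), (((m':ℝ)+1) + (N:ℝ)/2 - 1 - i)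
        = ((((m':ℝ)+1) + (N:ℝ)/2 - 1)) * P := by
      rw [Finset.prod_range_succ']
      have hsh : ∀ i ∈ Finset.range k,
          (((m':ℝ)+1) + (N:ℝ)/2 - 1 - (↑(i+1) : ℝ)) = ((m':ℝ) + (N:ℝ)/2 - 1 - i) :=
        fun i _ => by push_cast; ring
      rw [Finset.prod_congr rfl hsh, hPdef]
      norm_num
      ring
    have hgoal : S (mderiv γ p)
        ≤ ((2*((m':ℝ)+1))^(k+1) * ∏ i ∈ Finset.range (k+1), (((m':ℝ)+1) + (N:ℝ)/2 - 1 - i))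
          * S p := by
      calc S (mderiv γ p) = S (mderiv γ' q) := by rw [hmd]
        _ ≤ ((2*(m':ℝ))^k * P) * S q := hIH
        _ ≤ ((2*(m':ℝ))^k * P) * ((2*((m':ℝ)+1)) * ((((m':ℝ)+1) + (N:ℝ)/2 - 1)) * S p) := by
            apply mul_le_mul_of_nonneg_left hstep
            exact mul_nonneg (by positivity) hP
        _ = ((2*(m':ℝ))^k * ((2*((m':ℝ)+1)) * ((((m':ℝ)+1) + (N:ℝ)/2 - 1)) * P)) * S p := by
            ring
        _ ≤ ((2*((m':ℝ)+1))^k * ((2*((m':ℝ)+1)) * ((((m':ℝ)+1) + (N:ℝ)/2 - 1)) * P)) * S p := by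
            apply mul_le_mul_of_nonneg_right ?_ (S_nonneg p)
            apply mul_le_mul_of_nonneg_right ?_
              (mul_nonneg (mul_nonneg (by positivity) hBnn) hP)
            exact pow_le_pow_left₀ (by positivity) (by linarith) k
        _ = ((2*((m':ℝ)+1))^(k+1) * ((((m':ℝ)+1) + (N:ℝ)/2 - 1) * P)) * S p := by ring
        _ = ((2*((m':ℝ)+1))^(k+1) * ∏ i ∈ Finset.range (k+1), (((m':ℝ)+1) + (N:ℝ)/2 - 1 - i))
            * S p := by rw [hprod]
    have hcast : ((m' + 1 : ℕ) : ℝ) = (m' : ℝ) + 1 := by push_cast; ring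
    rw [hcast]
    exact hgoal

end Main

end SH

theorem stmt7 (N : ℕ) (hN : 1 ≤ N) (m : ℕ) (p : MvPolynomial (Fin N) ℂ)
    (hhom : p.IsHomogeneous m) (hharm : polyLap p = 0) (γ : Fin N → ℕ) :
    ((∑ j, γ j) ≤ m →
      sphL2 (mderiv γ p) ≤
        Real.sqrt ((2 * (m : ℝ)) ^ (∑ j, γ j) *
          fallingFactorial ((m : ℝ) + (N : ℝ) / 2 - 1) (∑ j, γ j)) * sphL2 p) ∧
    (m < (∑ j, γ j) → mderiv γ p = 0) := by
  constructor
  · intro hk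
    have hmain := SH.main_ineq hN (∑ j, γ j) γ m p hhom hharm rfl hk
    have hs1 : sphL2 (mderiv γ p) = Real.sqrt (SH.S (mderiv γ p)) := rfl
    have hs2 : sphL2 p = Real.sqrt (SH.S p) := rfl
    have hff : fallingFactorial ((m : ℝ) + (N : ℝ) / 2 - 1) (∑ j, γ j)
        = ∏ i ∈ Finset.range (∑ j, γ j), ((m:ℝ) + (N:ℝ)/2 - 1 - i) := rfl
    have hC : (0:ℝ) ≤ (2 * (m : ℝ)) ^ (∑ j, γ j) *
        fallingFactorial ((m : ℝ) + (N : ℝ) / 2 - 1) (∑ j, γ j) := by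
      rw [hff]
      exact mul_nonneg (by positivity) (SH.prod_fact_nonneg hN hk)
    rw [hs1, hs2]
    calc Real.sqrt (SH.S (mderiv γ p))
        ≤ Real.sqrt (((2 * (m : ℝ)) ^ (∑ j, γ j) *
            fallingFactorial ((m : ℝ) + (N : ℝ) / 2 - 1) (∑ j, γ j)) * SH.S p) := by
          apply Real.sqrt_le_sqrt
          rw [hff]
          exact hmain
      _ = Real.sqrt ((2 * (m : ℝ)) ^ (∑ j, γ j) *
            fallingFactorial ((m : ℝ) + (N : ℝ) / 2 - 1) (∑ j, γ j)) * Real.sqrt (SH.S p) :=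
          Real.sqrt_mul hC _
  · intro hk
    exact SH.vanish (∑ j, γ j) γ m p hhom rfl hk
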